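/- Let G be a simple graph with n ≥ 2 vertices, m edges and Laplacian eigenvalues μ₁ ≥ … ≥ μ_{n−1} ≥ μₙ = 0. Then (2/(n−1)) · ( (n−1)(Zg(G) + 2m) − 4m² )^{1/2} ≤ S_L(G), where Zg(G) is the first Zagreb index of G. -/

import Mathlib

open Finset Polynomial

/-- `μ` is the (weakly decreasing) sequence of eigenvalues of the Laplacian matrix of `G`:
it is antitone and the characteristic polynomial of `L(G)` is `∏ i (x - μ i)`. -/
def IsLapEigSeq {n : ℕ} (G : SimpleGraph (Fin n)) [DecidableRel G.Adj]
    (μ : Fin n → ℝ) : Prop :=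
  (∀ i j : Fin n, i ≤ j → μ j ≤ μ i) ∧
    (G.lapMatrix ℝ).charpoly = ∏ i : Fin n, (X - C (μ i))

section AuxSpread
open Matrix

lemma myCharpolyConj {N : ℕ} (U B : Matrix (Fin N) (Fin N) ℝ)
    (h1 : star U * U = 1) (h2 : U * star U = 1) :
    (U * B * star U).charpoly = B.charpoly := by
  have key : ∀ M : Matrix (Fin N) (Fin N) ℝ[X],
      Matrix.scalar (Fin N) X * M = M * Matrix.scalar (Fin N) X :=
    fun M => (Matrix.scalar_commute (X : ℝ[X]) (fun r => Commute.all _ _) M).eq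
  have hc : charmatrix (U * B * star U)
      = (C : ℝ →+* ℝ[X]).mapMatrix U * charmatrix B * (C : ℝ →+* ℝ[X]).mapMatrix (star U) := by
    simp only [charmatrix, mul_sub, sub_mul, ← _root_.map_mul]
    congr 1
    rw [← key (C.mapMatrix U), mul_assoc, ← _root_.map_mul, h2, _root_.map_one, mul_one]
  rw [Matrix.charpoly, Matrix.charpoly, hc, Matrix.det_mul, Matrix.det_mul, mul_comm,
    ← mul_assoc, ← Matrix.det_mul, ← _root_.map_mul C.mapMatrix, h1, _root_.map_one,
    Matrix.det_one, one_mul]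

lemma myCharpolyDiag {N : ℕ} (d : Fin N → ℝ) :
    (Matrix.diagonal d).charpoly = ∏ i : Fin N, (X - C (d i)) := by
  rw [Matrix.charpoly_of_upperTriangular _ (Matrix.blockTriangular_diagonal d)]
  simp

lemma myHermCharpoly {N : ℕ} (A : Matrix (Fin N) (Fin N) ℝ) (hA : A.IsHermitian) :
    A.charpoly = ∏ i : Fin N, (X - C (hA.eigenvalues i)) := by
  have hU := (Unitary.mem_iff).mp (hA.eigenvectorUnitary).2
  conv_lhs => rw [show A = (hA.eigenvectorUnitary : Matrix (Fin N) (Fin N) ℝ) * Matrix.diagonal (RCLike.ofReal ∘ hA.eigenvalues) * star (hA.eigenvectorUnitary : Matrix (Fin N) (Fin N) ℝ) from hA.spectral_theorem]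
  rw [myCharpolyConj _ _ hU.1 hU.2]
  have : (RCLike.ofReal ∘ hA.eigenvalues : Fin N → ℝ) = hA.eigenvalues := by
    ext i; simp
  rw [this, myCharpolyDiag]

lemma myMultisetEq {N : ℕ} (A : Matrix (Fin N) (Fin N) ℝ) (hA : A.IsHermitian)
    (μ : Fin N → ℝ) (h : A.charpoly = ∏ i : Fin N, (X - C (μ i))) :
    (univ.val.map μ) = (univ.val.map hA.eigenvalues) := by
  have h1 : ((univ.val.map μ).map fun a => X - C a).prod
      = ((univ.val.map hA.eigenvalues).map fun a => X - C a).prod := by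
    rw [Multiset.map_map, Multiset.map_map]
    rw [show ((fun a => X - C a) ∘ μ) = fun i => X - C (μ i) from rfl,
      show ((fun a => X - C a) ∘ hA.eigenvalues) = fun i => X - C (hA.eigenvalues i) from rfl,
      ← Finset.prod_eq_multiset_prod, ← Finset.prod_eq_multiset_prod]
    rw [← h, myHermCharpoly A hA]
  have := congrArg Polynomial.roots h1
  rwa [Polynomial.roots_multiset_prod_X_sub_C, Polynomial.roots_multiset_prod_X_sub_C] at this

lemma mySumEq {N : ℕ} (A : Matrix (Fin N) (Fin N) ℝ) (hA : A.IsHermitian)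
    (μ : Fin N → ℝ) (h : A.charpoly = ∏ i : Fin N, (X - C (μ i))) (f : ℝ → ℝ) :
    ∑ i : Fin N, f (μ i) = ∑ i : Fin N, f (hA.eigenvalues i) := by
  rw [Finset.sum_eq_multiset_sum, Finset.sum_eq_multiset_sum,
    show univ.val.map (fun i => f (μ i)) = (univ.val.map μ).map f by rw [Multiset.map_map]; rfl,
    show univ.val.map (fun i => f (hA.eigenvalues i)) = (univ.val.map hA.eigenvalues).map f by
      rw [Multiset.map_map]; rfl,
    myMultisetEq A hA μ h]

lemma myTraceEq {N : ℕ} (A : Matrix (Fin N) (Fin N) ℝ) (hA : A.IsHermitian) :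
    A.trace = ∑ i, hA.eigenvalues i := by
  have hU := (Unitary.mem_iff).mp (hA.eigenvectorUnitary).2
  conv_lhs => rw [show A = (hA.eigenvectorUnitary : Matrix (Fin N) (Fin N) ℝ) * Matrix.diagonal (RCLike.ofReal ∘ hA.eigenvalues) * star (hA.eigenvectorUnitary : Matrix (Fin N) (Fin N) ℝ) from hA.spectral_theorem]
  rw [Matrix.trace_mul_cycle, hU.1, Matrix.one_mul]
  simp [Matrix.trace_diagonal]

lemma myTraceSqEq {N : ℕ} (A : Matrix (Fin N) (Fin N) ℝ) (hA : A.IsHermitian) :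
    (A * A).trace = ∑ i, (hA.eigenvalues i) ^ 2 := by
  have hU := (Unitary.mem_iff).mp (hA.eigenvectorUnitary).2
  set U : Matrix (Fin N) (Fin N) ℝ := (hA.eigenvectorUnitary : Matrix (Fin N) (Fin N) ℝ) with hUdef
  set D : Matrix (Fin N) (Fin N) ℝ := Matrix.diagonal (RCLike.ofReal ∘ hA.eigenvalues) with hD
  have hAe : A = U * D * star U := hA.spectral_theorem
  have e : A * A = U * (D * D) * star U := by
    rw [hAe, show U * D * star U * (U * D * star U) = U * D * (star U * U) * (D * star U) by
      noncomm_ring, hU.1, Matrix.mul_one]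
    noncomm_ring
  rw [e, Matrix.trace_mul_cycle, hU.1, Matrix.one_mul, hD,
    Matrix.diagonal_mul_diagonal, Matrix.trace_diagonal]
  simp [pow_two]

lemma myLapDiag {N : ℕ} (G : SimpleGraph (Fin N)) [DecidableRel G.Adj] (i : Fin N) :
    G.lapMatrix ℝ i i = (G.degree i : ℝ) := by
  simp [SimpleGraph.lapMatrix, SimpleGraph.degMatrix]

lemma myLapOff {N : ℕ} (G : SimpleGraph (Fin N)) [DecidableRel G.Adj] {i j : Fin N}
    (h : i ≠ j) : G.lapMatrix ℝ i j = -(if G.Adj i j then (1:ℝ) else 0) := by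
  simp [SimpleGraph.lapMatrix, SimpleGraph.degMatrix, Matrix.diagonal_apply_ne _ h]

lemma myRowSum {N : ℕ} (G : SimpleGraph (Fin N)) [DecidableRel G.Adj] (i : Fin N) :
    ∑ j, (if G.Adj i j then (1:ℝ) else 0) = (G.degree i : ℝ) := by
  rw [Finset.sum_boole, SimpleGraph.degree, SimpleGraph.neighborFinset_eq_filter]

lemma myLapTrace {N : ℕ} (G : SimpleGraph (Fin N)) [DecidableRel G.Adj] :
    (G.lapMatrix ℝ).trace = ∑ v, (G.degree v : ℝ) := by
  rw [Matrix.trace]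
  exact Finset.sum_congr rfl fun i _ => myLapDiag G i

lemma myLapTraceSq {N : ℕ} (G : SimpleGraph (Fin N)) [DecidableRel G.Adj] :
    (G.lapMatrix ℝ * G.lapMatrix ℝ).trace
      = (∑ v, (G.degree v : ℝ) ^ 2) + ∑ v, (G.degree v : ℝ) := by
  have hpt : ∀ i j : Fin N, G.lapMatrix ℝ i j * G.lapMatrix ℝ j i
      = (if i = j then (G.degree i : ℝ)^2 else 0) + (if G.Adj i j then 1 else 0) := by
    intro i j
    by_cases h : i = j
    · subst h
      simp [myLapDiag, G.irrefl, pow_two]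
    · rw [myLapOff G h, myLapOff G (Ne.symm h), if_neg h]
      by_cases ha : G.Adj i j
      · simp [ha, G.adj_symm ha]
      · simp [ha, fun hja => ha (G.adj_symm hja)]
  have : (G.lapMatrix ℝ * G.lapMatrix ℝ).trace = ∑ i, ∑ j, G.lapMatrix ℝ i j * G.lapMatrix ℝ j i := by
    rw [Matrix.trace]
    exact Finset.sum_congr rfl fun i _ => by rw [Matrix.diag_apply, Matrix.mul_apply]
  rw [this]
  rw [show (∑ i, ∑ j, G.lapMatrix ℝ i j * G.lapMatrix ℝ j i)
      = ∑ i : Fin N, ((G.degree i : ℝ)^2 + (G.degree i : ℝ)) from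
    Finset.sum_congr rfl fun i _ => by
      rw [Finset.sum_congr rfl fun j _ => hpt i j, Finset.sum_add_distrib,
        Finset.sum_ite_eq univ i (fun _ => (G.degree i : ℝ)^2), if_pos (Finset.mem_univ i),
        myRowSum G i]]
  rw [Finset.sum_add_distrib]

lemma myZeroEig {N : ℕ} (hN : 0 < N) (G : SimpleGraph (Fin N)) [DecidableRel G.Adj]
    (μ : Fin N → ℝ) (h : (G.lapMatrix ℝ).charpoly = ∏ i : Fin N, (X - C (μ i))) :
    ∃ i, μ i = 0 := by
  have hH : (G.lapMatrix ℝ).IsHermitian := (SimpleGraph.posSemidef_lapMatrix ℝ G).1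
  have hdet : (G.lapMatrix ℝ).det = 0 := by
    rw [← Matrix.exists_mulVec_eq_zero_iff]
    refine ⟨fun _ => 1, ?_, SimpleGraph.lapMatrix_mulVec_const_eq_zero G⟩
    intro hc
    have := congrFun hc ⟨0, hN⟩
    simp at this
  have hprod : ∏ i, hH.eigenvalues i = 0 := by
    have := hH.det_eq_prod_eigenvalues
    rw [hdet] at this
    exact_mod_cast this.symm
  obtain ⟨j, -, hj⟩ := Finset.prod_eq_zero_iff.mp hprod
  have hmem : (0:ℝ) ∈ univ.val.map μ := by
    rw [myMultisetEq _ hH μ h]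
    exact Multiset.mem_map.mpr ⟨j, Finset.mem_univ j, hj⟩
  obtain ⟨i, -, hi⟩ := Multiset.mem_map.mp hmem
  exact ⟨i, hi⟩

lemma myEigNonneg {N : ℕ} (G : SimpleGraph (Fin N)) [DecidableRel G.Adj]
    (μ : Fin N → ℝ) (h : (G.lapMatrix ℝ).charpoly = ∏ i : Fin N, (X - C (μ i))) (i : Fin N) :
    0 ≤ μ i := by
  have hpsd := SimpleGraph.posSemidef_lapMatrix ℝ G
  have hmem : μ i ∈ univ.val.map hpsd.1.eigenvalues := by
    rw [← myMultisetEq _ hpsd.1 μ h]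
    exact Multiset.mem_map.mpr ⟨i, Finset.mem_univ i, rfl⟩
  obtain ⟨j, -, hj⟩ := Multiset.mem_map.mp hmem
  exact hj ▸ hpsd.eigenvalues_nonneg j

lemma myPopoviciu {K : ℕ} (x : Fin (K+1) → ℝ) (a b : ℝ)
    (ha : ∀ i, a ≤ x i) (hb : ∀ i, x i ≤ b) :
    ((K:ℝ)+1) * (∑ i, (x i)^2) - (∑ i, x i)^2 ≤ (((K:ℝ)+1) * (b - a) / 2)^2 := by
  have h1 : 0 ≤ ∑ i, (b - x i)*(x i - a) :=
    Finset.sum_nonneg fun i _ => mul_nonneg (by linarith [hb i]) (by linarith [ha i])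
  have h2 : ∑ i, (b - x i)*(x i - a)
      = (a+b)*(∑ i, x i) - (∑ i, (x i)^2) - ((K:ℝ)+1)*(a*b) := by
    rw [Finset.sum_congr rfl (fun i _ =>
      show (b - x i)*(x i - a) = (a+b)*(x i) - (x i)^2 - a*b by ring)]
    rw [Finset.sum_sub_distrib, Finset.sum_sub_distrib, ← Finset.mul_sum, Finset.sum_const,
      Finset.card_univ, Fintype.card_fin]
    ring
  rw [h2] at h1
  have hk : (0:ℝ) ≤ (K:ℝ)+1 := by positivity
  nlinarith [mul_nonneg hk h1, sq_nonneg (((K:ℝ)+1)*(a+b) - 2*(∑ i, x i))]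

theorem aux_spread_bound
    {n : ℕ} (hn : 2 ≤ n) (G : SimpleGraph (Fin n)) [DecidableRel G.Adj]
    (m : ℕ) (hm : G.edgeFinset.card = m)
    (μ : Fin n → ℝ) (hμ : (∀ i j : Fin n, i ≤ j → μ j ≤ μ i) ∧
    (G.lapMatrix ℝ).charpoly = ∏ i : Fin n, (X - C (μ i))) :
    2 / ((n : ℝ) - 1) *
        Real.sqrt (((n : ℝ) - 1) * ((∑ v : Fin n, (G.degree v : ℝ) ^ 2) + 2 * (m : ℝ))
          - 4 * (m : ℝ) ^ 2)
      ≤ μ ⟨0, lt_of_lt_of_le two_pos hn⟩ - μ ⟨n - 2, Nat.sub_lt (lt_of_lt_of_le two_pos hn) two_pos⟩ := by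
  obtain ⟨k, rfl⟩ : ∃ k, n = k + 2 := ⟨n - 2, by omega⟩
  obtain ⟨hmono, hcp⟩ := hμ
  have hH : (G.lapMatrix ℝ).IsHermitian := (SimpleGraph.posSemidef_lapMatrix ℝ G).1
  -- degree sum
  have hdeg : ∑ v, (G.degree v : ℝ) = 2 * (m:ℝ) := by
    have := G.sum_degrees_eq_twice_card_edges
    rw [hm] at this
    exact_mod_cast congrArg (Nat.cast : ℕ → ℝ) this
  -- moments
  have hsum1 : ∑ i : Fin (k+2), μ i = 2 * (m:ℝ) := by
    have h := mySumEq _ hH μ hcp (fun x => x)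
    rw [h, ← myTraceEq _ hH, myLapTrace, hdeg]
  have hsum2 : ∑ i : Fin (k+2), (μ i)^2
      = (∑ v, (G.degree v : ℝ) ^ 2) + 2 * (m:ℝ) := by
    have h := mySumEq _ hH μ hcp (fun x => x^2)
    rw [h, ← myTraceSqEq _ hH, myLapTraceSq, hdeg]
  -- last eigenvalue is zero
  have hlast : μ ⟨k+1, by omega⟩ = 0 := by
    obtain ⟨i, hi⟩ := myZeroEig (by omega) G μ hcp
    refine le_antisymm ?_ (myEigNonneg G μ hcp _)
    have := hmono i ⟨k+1, by omega⟩ (by simp [Fin.le_def]; omega)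
    rw [hi] at this
    exact this
  set x : Fin (k+1) → ℝ := fun i => μ i.castSucc with hx
  set b : ℝ := μ ⟨0, by omega⟩ with hbdef
  set a : ℝ := μ ⟨k, by omega⟩ with hadef
  have ha : ∀ i, a ≤ x i := fun i =>
    hmono i.castSucc ⟨k, by omega⟩ (by simp [Fin.le_def, Fin.castSucc]; omega)
  have hb : ∀ i, x i ≤ b := fun i =>
    hmono ⟨0, by omega⟩ i.castSucc (by simp [Fin.le_def])
  have hba : a ≤ b := le_trans (ha 0) (hb 0)
  have hlast' : μ (Fin.last (k+1)) = 0 := hlast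
  have hS : ∑ i : Fin (k+1), x i = 2 * (m:ℝ) := by
    have h := Fin.sum_univ_castSucc (n := k+1) (f := μ)
    rw [hsum1, hlast'] at h
    linarith [h]
  have hQ : ∑ i : Fin (k+1), (x i)^2
      = (∑ v, (G.degree v : ℝ) ^ 2) + 2 * (m:ℝ) := by
    have h := Fin.sum_univ_castSucc (n := k+1) (f := fun i => (μ i)^2)
    rw [hsum2, hlast'] at h
    have : (0:ℝ)^2 = 0 := by ring
    rw [this] at h
    linarith [h]
  have hpop := myPopoviciu x a b ha hb
  rw [hS, hQ] at hpop
  have hK : ((k+2:ℕ):ℝ) - 1 = (k:ℝ) + 1 := by push_cast; ring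
  rw [hK]
  have hsq : 4 * (m:ℝ)^2 = (2*(m:ℝ))^2 := by ring
  have h1 : Real.sqrt (((k:ℝ)+1) * ((∑ v, (G.degree v : ℝ) ^ 2) + 2 * (m:ℝ)) - 4 * (m:ℝ)^2)
      ≤ ((k:ℝ)+1) * (b - a) / 2 := by
    rw [hsq]
    refine le_trans (Real.sqrt_le_sqrt hpop) (le_of_eq ?_)
    exact Real.sqrt_sq
      (div_nonneg (mul_nonneg (by positivity) (by linarith)) (by norm_num))
  have hkpos : (0:ℝ) < (k:ℝ) + 1 := by positivity
  calc 2 / ((k:ℝ)+1) * Real.sqrt (((k:ℝ)+1) * ((∑ v, (G.degree v : ℝ) ^ 2) + 2 * (m:ℝ))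
        - 4 * (m:ℝ)^2)
      ≤ 2 / ((k:ℝ)+1) * (((k:ℝ)+1) * (b - a) / 2) := by
        exact mul_le_mul_of_nonneg_left h1 (by positivity)
    _ = b - a := by field_simp


end AuxSpread

/-- `(2/(n-1))·√((n-1)(Zg(G)+2m) - 4m²) ≤ S_L(G)`. -/
theorem two_div_sqrt_bound_le_laplacianSpread
    {n : ℕ} (hn : 2 ≤ n) (G : SimpleGraph (Fin n)) [DecidableRel G.Adj]
    (m : ℕ) (hm : G.edgeFinset.card = m)
    (μ : Fin n → ℝ) (hμ : IsLapEigSeq G μ) :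
    2 / ((n : ℝ) - 1) *
        Real.sqrt (((n : ℝ) - 1) * ((∑ v : Fin n, (G.degree v : ℝ) ^ 2) + 2 * (m : ℝ))
          - 4 * (m : ℝ) ^ 2)
      ≤ μ ⟨0, by omega⟩ - μ ⟨n - 2, by omega⟩ := by
  exact aux_spread_bound hn G m hm μ hμ
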